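/- In the weak-effects scaling of the zealot model with reinforcement, for every fixed x ∈ (0, 1), μ > 0, θ₁, θ₂ ≥ 0 and N₁, N₂ > 0, the net drift satisfies, as h → 0⁺, f₊^h(x) − f₋^h(x) = μ·h·( ((θ₁+θ₂)x − θ₁)·x·(1−x) − (N₁+N₂)x + N₁ ) + O(h²); that is, the function h ↦ f₊^h(x) − f₋^h(x) − μh(((θ₁+θ₂)x−θ₁)x(1−x) − (N₁+N₂)x + N₁) is O(h²) as h tends to 0 from the right. -/

import Mathlib

open Asymptotics Filter

/-- Scaled upward jump rate of the zealot model with reinforcement in the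
weak-effects scaling, `h = 1/N`. -/
noncomputable def fplus (μ θ₁ θ₂ N₁ N₂ h x : ℝ) : ℝ :=
  μ * (1 - x) * ((1 - h * θ₁) * (x + h * N₁)) /
    ((1 - h * θ₁) * (x + h * N₁) + (1 - x + h * N₂))

/-- Scaled downward jump rate of the zealot model with reinforcement in the
weak-effects scaling, `h = 1/N`. -/
noncomputable def fminus (μ θ₁ θ₂ N₁ N₂ h x : ℝ) : ℝ :=
  μ * x * ((1 - h * θ₂) * (1 - x + h * N₂)) /
    ((x + h * N₁) + (1 - h * θ₂) * (1 - x + h * N₂))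

set_option maxHeartbeats 2000000 in
/-- Weak-effects expansion of the net drift: for fixed `x ∈ (0,1)`, `μ > 0`,
`θ₁, θ₂ ≥ 0` and `N₁, N₂ > 0`, as `h → 0⁺`,
`f₊ʰ(x) − f₋ʰ(x) = μh(((θ₁+θ₂)x − θ₁)x(1−x) − (N₁+N₂)x + N₁) + O(h²)`. -/
theorem net_drift_weak_effects_expansion (μ θ₁ θ₂ N₁ N₂ x : ℝ)
    (hx : x ∈ Set.Ioo (0 : ℝ) 1) (hμ : 0 < μ) (hθ₁ : 0 ≤ θ₁) (hθ₂ : 0 ≤ θ₂)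
    (hN₁ : 0 < N₁) (hN₂ : 0 < N₂) :
    (fun h : ℝ => fplus μ θ₁ θ₂ N₁ N₂ h x - fminus μ θ₁ θ₂ N₁ N₂ h x
        - μ * h * (((θ₁ + θ₂) * x - θ₁) * x * (1 - x) - (N₁ + N₂) * x + N₁))
      =O[nhdsWithin 0 (Set.Ioi 0)] (fun h : ℝ => h ^ 2) := by
  set l := nhdsWithin (0:ℝ) (Set.Ioi 0) with hl
  set Dp : ℝ → ℝ := fun h => (1 - h * θ₁) * (x + h * N₁) + (1 - x + h * N₂) with hDp
  set Dm : ℝ → ℝ := fun h => (x + h * N₁) + (1 - h * θ₂) * (1 - x + h * N₂) with hDm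
  set Q : ℝ → ℝ := fun h => μ*N₂^2*x + μ*N₂^3*x*h + (-1)*μ*N₁*N₂ + 2*μ*N₁*N₂*x + (-1)*μ*N₁*N₂^2*h + 3*μ*N₁*N₂^2*x*h + (-1)*μ*N₁^2 + μ*N₁^2*x + (-2)*μ*N₁^2*N₂*h + 3*μ*N₁^2*N₂*x*h + (-1)*μ*N₁^3*h + μ*N₁^3*x*h + (-1)*μ*θ₂*N₂*x^2 + 2*μ*θ₂*N₂*x^3 + (-1)*μ*θ₂*N₂^2*x*h + μ*θ₂*N₂^2*x^3*h + (-1)*μ*θ₂*N₂^3*x*h^2 + μ*θ₂*N₁*x + (-3)*μ*θ₂*N₁*x^2 + 2*μ*θ₂*N₁*x^3 + μ*θ₂*N₁*N₂*h + (-2)*μ*θ₂*N₁*N₂*x*h + 2*μ*θ₂*N₁*N₂*x^3*h + μ*θ₂*N₁*N₂^2*h^2 + (-2)*μ*θ₂*N₁*N₂^2*x*h^2 + μ*θ₂*N₁^2*h + (-2)*μ*θ₂*N₁^2*x*h + μ*θ₂*N₁^2*x^3*h + μ*θ₂*N₁^2*N₂*h^2 + (-1)*μ*θ₂*N₁^2*N₂*x*h^2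 + μ*θ₂^2*x^2 + (-2)*μ*θ₂^2*x^3 + μ*θ₂^2*x^4 + 2*μ*θ₂^2*N₂*x^2*h + (-3)*μ*θ₂^2*N₂*x^3*h + μ*θ₂^2*N₂*x^4*h + μ*θ₂^2*N₂^2*x^2*h^2 + (-1)*μ*θ₂^2*N₂^2*x^3*h^2 + μ*θ₂^2*N₁*x^2*h + (-2)*μ*θ₂^2*N₁*x^3*h + μ*θ₂^2*N₁*x^4*h + μ*θ₂^2*N₁*N₂*x^2*h^2 + (-1)*μ*θ₂^2*N₁*N₂*x^3*h^2 + μ*θ₁*N₂*x + (-3)*μ*θ₁*N₂*x^2 + 2*μ*θ₁*N₂*x^3 + μ*θ₁*N₂^2*x*h + (-3)*μ*θ₁*N₂^2*x^2*h + μ*θ₁*N₂^2*x^3*h + (-1)*μ*θ₁*N₁ + 4*μ*θ₁*N₁*x + (-5)*μ*θ₁*N₁*x^2 + 2*μ*θ₁*N₁*x^3 + (-1)*μ*θ₁*N₁*N₂*h + 4*μ*θ₁*N₁*N₂*x*h + (-6)*μ*θ₁*N₁*N₂*x^2*h + 2*μ*θ₁*N₁*N₂*x^3*h + (-1)*μ*θ₁*N₁*N₂^2*x*h^2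 + 2*μ*θ₁*N₁^2*x*h + (-3)*μ*θ₁*N₁^2*x^2*h + μ*θ₁*N₁^2*x^3*h + μ*θ₁*N₁^2*N₂*h^2 + (-2)*μ*θ₁*N₁^2*N₂*x*h^2 + μ*θ₁*N₁^3*h^2 + (-1)*μ*θ₁*N₁^3*x*h^2 + (-1)*μ*θ₁*θ₂*N₂*x*h + 4*μ*θ₁*θ₂*N₂*x^2*h + (-4)*μ*θ₁*θ₂*N₂*x^3*h + (-1)*μ*θ₁*θ₂*N₂^2*x*h^2 + 3*μ*θ₁*θ₂*N₂^2*x^2*h^2 + (-1)*μ*θ₁*θ₂*N₂^2*x^3*h^2 + μ*θ₁*θ₂*N₁*h + (-5)*μ*θ₁*θ₂*N₁*x*h + 8*μ*θ₁*θ₂*N₁*x^2*h + (-4)*μ*θ₁*θ₂*N₁*x^3*h + μ*θ₁*θ₂*N₁*N₂*h^2 + (-3)*μ*θ₁*θ₂*N₁*N₂*x*h^2 + 3*μ*θ₁*θ₂*N₁*N₂*x^2*h^2 + (-2)*μ*θ₁*θ₂*N₁*N₂*x^3*h^2 + μ*θ₁*θ₂*N₁*N₂^2*x*h^3 + (-1)*μ*θ₁*θ₂*N₁^2*h^2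 + 2*μ*θ₁*θ₂*N₁^2*x*h^2 + (-1)*μ*θ₁*θ₂*N₁^2*x^3*h^2 + (-1)*μ*θ₁*θ₂*N₁^2*N₂*h^3 + μ*θ₁*θ₂*N₁^2*N₂*x*h^3 + (-1)*μ*θ₁*θ₂^2*x^3*h + 2*μ*θ₁*θ₂^2*x^4*h + (-1)*μ*θ₁*θ₂^2*x^5*h + (-1)*μ*θ₁*θ₂^2*N₂*x^3*h^2 + μ*θ₁*θ₂^2*N₂*x^4*h^2 + (-1)*μ*θ₁*θ₂^2*N₁*x^2*h^2 + 2*μ*θ₁*θ₂^2*N₁*x^3*h^2 + (-1)*μ*θ₁*θ₂^2*N₁*x^4*h^2 + (-1)*μ*θ₁*θ₂^2*N₁*N₂*x^2*h^3 + μ*θ₁*θ₂^2*N₁*N₂*x^3*h^3 + (-1)*μ*θ₁^2*x^2 + 2*μ*θ₁^2*x^3 + (-1)*μ*θ₁^2*x^4 + (-1)*μ*θ₁^2*N₂*x^2*h + 2*μ*θ₁^2*N₂*x^3*h + (-1)*μ*θ₁^2*N₂*x^4*h + (-1)*μ*θ₁^2*N₁*x*h + μ*θ₁^2*N₁*x^2*h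 + μ*θ₁^2*N₁*x^3*h + (-1)*μ*θ₁^2*N₁*x^4*h + (-1)*μ*θ₁^2*N₁*N₂*x*h^2 + 2*μ*θ₁^2*N₁*N₂*x^2*h^2 + (-1)*μ*θ₁^2*N₁*N₂*x^3*h^2 + (-1)*μ*θ₁^2*N₁^2*x*h^2 + 2*μ*θ₁^2*N₁^2*x^2*h^2 + (-1)*μ*θ₁^2*N₁^2*x^3*h^2 + μ*θ₁^2*θ₂*x^2*h + (-3)*μ*θ₁^2*θ₂*x^3*h + 3*μ*θ₁^2*θ₂*x^4*h + (-1)*μ*θ₁^2*θ₂*x^5*h + μ*θ₁^2*θ₂*N₂*x^2*h^2 + (-2)*μ*θ₁^2*θ₂*N₂*x^3*h^2 + μ*θ₁^2*θ₂*N₂*x^4*h^2 + μ*θ₁^2*θ₂*N₁*x*h^2 + (-3)*μ*θ₁^2*θ₂*N₁*x^2*h^2 + 3*μ*θ₁^2*θ₂*N₁*x^3*h^2 + (-1)*μ*θ₁^2*θ₂*N₁*x^4*h^2 + μ*θ₁^2*θ₂*N₁*N₂*x*h^3 + (-2)*μ*θ₁^2*θ₂*N₁*N₂*x^2*h^3 +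 μ*θ₁^2*θ₂*N₁*N₂*x^3*h^3 with hQ
  have hDpc : Continuous Dp := by fun_prop
  have hDmc : Continuous Dm := by fun_prop
  have hQc : Continuous Q := by fun_prop
  have hDp0 : Dp 0 = 1 := by simp [hDp]
  have hDm0 : Dm 0 = 1 := by simp [hDm]
  have hDpev : ∀ᶠ h in l, Dp h ≠ 0 := by
    apply Filter.Eventually.filter_mono nhdsWithin_le_nhds
    have : Set.Iio (0:ℝ) ∈ nhds (Dp 0)⁻¹ → True := fun _ => trivial
    have := hDpc.continuousAt (x := (0:ℝ))
    exact this.eventually_ne (by rw [hDp0]; norm_num)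
  have hDmev : ∀ᶠ h in l, Dm h ≠ 0 := by
    apply Filter.Eventually.filter_mono nhdsWithin_le_nhds
    exact (hDmc.continuousAt (x := (0:ℝ))).eventually_ne (by rw [hDm0]; norm_num)
  have hg : Tendsto (fun h => Q h / (Dp h * Dm h)) l (nhds (Q 0 / (Dp 0 * Dm 0))) := by
    apply Tendsto.mono_left _ nhdsWithin_le_nhds
    exact (hQc.continuousAt.div ((hDpc.continuousAt).mul (hDmc.continuousAt))
      (by rw [Pi.mul_apply, hDp0, hDm0]; norm_num)).tendsto
  have hgO : (fun h => Q h / (Dp h * Dm h)) =O[l] (fun _ : ℝ => (1:ℝ)) :=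
    hg.isBigO_one ℝ
  have heq : (fun h : ℝ => fplus μ θ₁ θ₂ N₁ N₂ h x - fminus μ θ₁ θ₂ N₁ N₂ h x
        - μ * h * (((θ₁ + θ₂) * x - θ₁) * x * (1 - x) - (N₁ + N₂) * x + N₁))
      =ᶠ[l] (fun h : ℝ => h ^ 2 * (Q h / (Dp h * Dm h))) := by
    filter_upwards [hDpev, hDmev] with h h1 h2
    simp only [fplus, fminus, hQ, hDp, hDm] at *
    rw [div_sub_div _ _ h1 h2, mul_div_assoc', eq_div_iff (mul_ne_zero h1 h2), sub_mul,
      div_mul_cancel₀ _ (mul_ne_zero h1 h2)]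
    ring
  calc (fun h : ℝ => fplus μ θ₁ θ₂ N₁ N₂ h x - fminus μ θ₁ θ₂ N₁ N₂ h x
        - μ * h * (((θ₁ + θ₂) * x - θ₁) * x * (1 - x) - (N₁ + N₂) * x + N₁))
      =O[l] (fun h : ℝ => h ^ 2 * (Q h / (Dp h * Dm h))) := heq.isBigO
    _ =O[l] (fun h : ℝ => h ^ 2 * 1) := (isBigO_refl (fun h : ℝ => h ^ 2) l).mul hgO
    _ = fun h : ℝ => h ^ 2 := by funext h; ring
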